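/- (Elliptical potential bound.) Let n ≥ 1, γ > 0, and v₁,…,v_L ∈ ℂ^n. Define the Hermitian positive definite matrices A_τ := I_n + γ·Σ_{s=1}^{τ} v_s v_s^* for τ = 0,1,…,L (so A₀ = I_n). Then each v_τ^* A_τ^{-1} v_τ is a nonnegative real number, det(A_L) is a real number ≥ 1, and Σ_{τ=1}^{L} v_τ^* A_τ^{-1} v_τ ≤ γ^{-1}·log det(A_L). -/

import Mathlib

open Matrix
open scoped ComplexOrder

private lemma icc_succ (k : ℕ) : Finset.Icc 1 (k + 1) = insert (k + 1) (Finset.Icc 1 k) := by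
  ext x; simp only [Finset.mem_Icc, Finset.mem_insert]; omega

private lemma smul_psd {n : ℕ} {M : Matrix (Fin n) (Fin n) ℂ} (hM : M.PosSemidef)
    {γ : ℝ} (hγ : 0 ≤ γ) : ((γ : ℂ) • M).PosSemidef := by
  constructor
  · have h := hM.1
    unfold Matrix.IsHermitian at *
    rw [conjTranspose_smul, h]
    congr 1
    simp
  · exact (hM.smul (Complex.zero_le_real.mpr hγ)).2

private lemma det_step {n : ℕ} (B : Matrix (Fin n) (Fin n) ℂ) (hB : B.PosDef) (γ : ℝ)
    (w : Fin n → ℂ) :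
    (B - (γ : ℂ) • Matrix.vecMulVec w (star w)).det
      = B.det * (1 - (γ : ℂ) * (dotProduct (star w) (B⁻¹.mulVec w))) := by
  have hdet : IsUnit B.det := isUnit_iff_ne_zero.mpr hB.det_pos.ne'
  have h1 : B - (γ : ℂ) • Matrix.vecMulVec w (star w)
      = B + replicateCol Unit ((-(γ : ℂ)) • w) * replicateRow Unit (star w) := by
    rw [replicateCol_smul, Matrix.smul_mul, ← vecMulVec_eq Unit]
    rw [neg_smul, ← sub_eq_add_neg]
  rw [h1, det_add_replicateCol_mul_replicateRow hdet]
  congr 1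
  rw [← Matrix.replicateRow_vecMul, det_unique]
  simp only [Matrix.add_apply, Matrix.one_apply_eq, Matrix.replicateRow_mul_replicateCol_apply]
  rw [dotProduct_smul, ← dotProduct_mulVec]
  rw [smul_eq_mul, neg_mul, ← sub_eq_add_neg]

/-- Elliptical potential bound. Let `n ≥ 1`, `γ > 0`, `v₁,…,v_L ∈ ℂⁿ`,
and `A_τ := I + γ·Σ_{s=1}^{τ} v_s v_s^*` (Hermitian positive definite, `A₀ = I`).
Then each `v_τ^* A_τ⁻¹ v_τ` is a nonnegative real, `det(A_L)` is a real number `≥ 1`,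
and `Σ_{τ=1}^{L} v_τ^* A_τ⁻¹ v_τ ≤ γ⁻¹·log det(A_L)`. -/
theorem stmt19 (n L : ℕ) (hn : 1 ≤ n) (γ : ℝ) (hγ : 0 < γ)
    (v : ℕ → Fin n → ℂ)
    (A : ℕ → Matrix (Fin n) (Fin n) ℂ)
    (hA : ∀ τ, A τ = 1 + (γ : ℂ) •
      ∑ s ∈ Finset.Icc 1 τ, Matrix.vecMulVec (v s) (star (v s))) :
    (∀ τ, (A τ).PosDef) ∧
    (∀ τ, 1 ≤ τ → τ ≤ L →
      0 ≤ (dotProduct (star (v τ)) ((A τ)⁻¹.mulVec (v τ))).re ∧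
      (dotProduct (star (v τ)) ((A τ)⁻¹.mulVec (v τ))).im = 0) ∧
    (1 ≤ (A L).det.re ∧ (A L).det.im = 0) ∧
    ∑ τ ∈ Finset.Icc 1 L, (dotProduct (star (v τ)) ((A τ)⁻¹.mulVec (v τ))).re ≤
      γ⁻¹ * Real.log (A L).det.re := by
  -- PSD of each outer product
  have hW : ∀ s, (Matrix.vecMulVec (v s) (star (v s))).PosSemidef := by
    intro s
    have : Matrix.vecMulVec (v s) (star (v s)) = (replicateRow Unit (star (v s)))ᴴ * replicateRow Unit (star (v s)) := by
      rw [conjTranspose_replicateRow, star_star, ← vecMulVec_eq Unit]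
    rw [this]
    exact posSemidef_conjTranspose_mul_self _
  -- PSD of the sums
  have hSum : ∀ τ, (∑ s ∈ Finset.Icc 1 τ, Matrix.vecMulVec (v s) (star (v s))).PosSemidef := by
    intro τ
    induction τ with
    | zero => simp [Finset.Icc_eq_empty_of_lt]; exact Matrix.PosSemidef.zero
    | succ k ih =>
      rw [icc_succ, Finset.sum_insert (by simp [Finset.mem_Icc])]
      exact (hW (k + 1)).add ih
  -- PosDef of each A τ
  have hPD : ∀ τ, (A τ).PosDef := by
    intro τ
    rw [hA τ]
    exact Matrix.PosDef.add_posSemidef Matrix.PosDef.one (smul_psd (hSum τ) hγ.le)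
  -- nonnegativity of the quadratic form values
  have hq : ∀ τ, 0 ≤ dotProduct (star (v τ)) ((A τ)⁻¹.mulVec (v τ)) := by
    intro τ
    exact ((hPD τ).inv.posSemidef).dotProduct_mulVec_nonneg (v τ)
  have hqre : ∀ τ, 0 ≤ (dotProduct (star (v τ)) ((A τ)⁻¹.mulVec (v τ))).re := by
    intro τ; exact (Complex.le_def.mp (hq τ)).1
  have hqim : ∀ τ, (dotProduct (star (v τ)) ((A τ)⁻¹.mulVec (v τ))).im = 0 := by
    intro τ; exact ((Complex.le_def.mp (hq τ)).2).symm
  -- determinant facts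
  have hdet : ∀ τ, (0 : ℂ) < (A τ).det := fun τ => (hPD τ).det_pos
  have hDpos : ∀ τ, 0 < (A τ).det.re := fun τ => (Complex.lt_def.mp (hdet τ)).1
  have hDim : ∀ τ, (A τ).det.im = 0 := fun τ => ((Complex.lt_def.mp (hdet τ)).2).symm
  have hDpos' : ∀ τ, (0:ℝ) < (A τ).det.re := hDpos
  -- step identity for determinants
  have hstep : ∀ k : ℕ, (A k).det.re
      = (A (k + 1)).det.re * (1 - γ * (dotProduct (star (v (k+1))) ((A (k+1))⁻¹.mulVec (v (k+1)))).re) := by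
    intro k
    have hAk : A k = A (k + 1) - (γ : ℂ) • Matrix.vecMulVec (v (k + 1)) (star (v (k + 1))) := by
      rw [hA k, hA (k + 1), icc_succ, Finset.sum_insert (by simp [Finset.mem_Icc])]
      rw [smul_add]
      abel
    have hcdet : (A k).det = (A (k + 1)).det *
        (1 - (γ : ℂ) * (dotProduct (star (v (k + 1))) ((A (k + 1))⁻¹.mulVec (v (k + 1))))) := by
      rw [hAk]
      exact det_step _ (hPD (k + 1)) γ (v (k + 1))
    have h := congrArg Complex.re hcdet
    simp only [Complex.mul_re, Complex.sub_re, Complex.one_re, Complex.mul_im, Complex.sub_im,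
      Complex.one_im, Complex.ofReal_re, Complex.ofReal_im, hDim, hqim, zero_mul, mul_zero,
      zero_sub, sub_zero, zero_add, neg_zero] at h
    exact h
  -- D 0 = 1 and monotone
  have hD0 : (A 0).det.re = 1 := by
    simp [hA 0]
  have hmono : ∀ k, (A k).det.re ≤ (A (k + 1)).det.re := by
    intro k
    rw [hstep k]
    nlinarith [hDpos (k + 1), hqre (k + 1), hγ,
      mul_nonneg (mul_nonneg hγ.le (hqre (k + 1))) (hDpos (k + 1)).le]
  have hge1 : ∀ k, 1 ≤ (A k).det.re := by
    intro k
    induction k with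
    | zero => rw [hD0]
    | succ m ih => exact ih.trans (hmono m)
  -- per-step log bound
  have hlogstep : ∀ k : ℕ,
      (dotProduct (star (v (k+1))) ((A (k+1))⁻¹.mulVec (v (k+1)))).re ≤
        γ⁻¹ * (Real.log (A (k+1)).det.re - Real.log (A k).det.re) := by
    intro k
    set r := (dotProduct (star (v (k+1))) ((A (k+1))⁻¹.mulVec (v (k+1)))).re with hr
    have h1 : 1 - γ * r = (A k).det.re / (A (k+1)).det.re := by
      rw [eq_div_iff (hDpos (k+1)).ne']
      linarith [hstep k]
    have hx : 0 < (A (k+1)).det.re / (A k).det.re := div_pos (hDpos (k + 1)) (hDpos k)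
    have hlog : 1 - ((A (k+1)).det.re / (A k).det.re)⁻¹ ≤
        Real.log ((A (k+1)).det.re / (A k).det.re) := Real.one_sub_inv_le_log_of_pos hx
    rw [Real.log_div (hDpos (k + 1)).ne' (hDpos k).ne', inv_div, ← h1] at hlog
    have h2 : γ * r ≤ Real.log (A (k+1)).det.re - Real.log (A k).det.re := by linarith
    have h3 := mul_le_mul_of_nonneg_left h2 (inv_nonneg.mpr hγ.le)
    rwa [inv_mul_cancel_left₀ hγ.ne'] at h3
  -- telescoping
  have htele : ∑ τ ∈ Finset.Icc 1 L,
      (dotProduct (star (v τ)) ((A τ)⁻¹.mulVec (v τ))).re ≤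
        γ⁻¹ * Real.log (A L).det.re := by
    have hsum : ∑ τ ∈ Finset.Icc 1 L,
        (dotProduct (star (v τ)) ((A τ)⁻¹.mulVec (v τ))).re ≤
        ∑ τ ∈ Finset.Icc 1 L,
          γ⁻¹ * (Real.log (A τ).det.re - Real.log (A (τ - 1)).det.re) := by
      apply Finset.sum_le_sum
      intro τ hτ
      rw [Finset.mem_Icc] at hτ
      obtain ⟨k, rfl⟩ : ∃ k, τ = k + 1 := ⟨τ - 1, by omega⟩
      simpa using hlogstep k
    have htel : ∀ M : ℕ, ∑ τ ∈ Finset.Icc 1 M,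
        γ⁻¹ * (Real.log (A τ).det.re - Real.log (A (τ - 1)).det.re)
        = γ⁻¹ * (Real.log (A M).det.re - Real.log (A 0).det.re) := by
      intro M
      induction M with
      | zero => simp [Finset.Icc_eq_empty_of_lt]
      | succ m ih =>
        rw [icc_succ, Finset.sum_insert (by simp [Finset.mem_Icc]), ih]
        simp only [Nat.add_sub_cancel]
        ring
    rw [htel L, hD0, Real.log_one, sub_zero] at hsum
    exact hsum
  exact ⟨hPD, fun τ _ _ => ⟨hqre τ, hqim τ⟩, ⟨hge1 L, hDim L⟩, htele⟩
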